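/- (Existence of SCL normal forms.) For every closed term P ∈ S_A there exists a term Q in SNF such that EqFSCL ⊢ P = Q. -/
import Mathlib


/-- Closed sequential propositional statements over `A`:
`P ::= a | T | F | ¬P | P ∧❛ P | P ∨❛ P`. -/
inductive STerm (A : Type) : Type
  | atom : A → STerm A
  | tt : STerm A
  | ff : STerm A
  | neg : STerm A → STerm A
  | and : STerm A → STerm A → STerm A
  | or : STerm A → STerm A → STerm A

/-- Derivability from the axiom set EqFSCL: the least congruence (w.r.t. `¬`, `∧❛`, `∨❛`)
on closed terms containing all closed substitution instances of the axioms (F1)-(F10). -/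
inductive EqFSCL {A : Type} : STerm A → STerm A → Prop
  | refl (P) : EqFSCL P P
  | symm {P Q} : EqFSCL P Q → EqFSCL Q P
  | trans {P Q R} : EqFSCL P Q → EqFSCL Q R → EqFSCL P R
  | neg_congr {P Q} : EqFSCL P Q → EqFSCL (.neg P) (.neg Q)
  | and_congr {P P' Q Q'} : EqFSCL P Q → EqFSCL P' Q' → EqFSCL (.and P P') (.and Q Q')
  | or_congr {P P' Q Q'} : EqFSCL P Q → EqFSCL P' Q' → EqFSCL (.or P P') (.or Q Q')
  | F1 : EqFSCL .ff (.neg .tt)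
  | F2 (x y) : EqFSCL (.or x y) (.neg (.and (.neg x) (.neg y)))
  | F3 (x) : EqFSCL (.neg (.neg x)) x
  | F4 (x) : EqFSCL (.and .tt x) x
  | F5 (x) : EqFSCL (.or x .ff) x
  | F6 (x) : EqFSCL (.and .ff x) .ff
  | F7 (x y z) : EqFSCL (.and (.and x y) z) (.and x (.and y z))
  | F8 (x) : EqFSCL (.and (.neg x) .ff) (.and x .ff)
  | F9 (x y) : EqFSCL (.or (.and x .ff) y) (.and (.or x .tt) y)
  | F10 (x y z) : EqFSCL (.or (.and x y) (.and z .ff))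
      (.and (.or x (.and z .ff)) (.or y (.and z .ff)))

/-- T-terms: `P^T ::= T | (a ∧❛ P^T) ∨❛ P^T`. -/
inductive IsTTerm {A : Type} : STerm A → Prop
  | tt : IsTTerm .tt
  | node (a : A) {P Q} : IsTTerm P → IsTTerm Q → IsTTerm (.or (.and (.atom a) P) Q)

/-- F-terms: `P^F ::= F | (a ∨❛ P^F) ∧❛ P^F`. -/
inductive IsFTerm {A : Type} : STerm A → Prop
  | ff : IsFTerm .ff
  | node (a : A) {P Q} : IsFTerm P → IsFTerm Q → IsFTerm (.and (.or (.atom a) P) Q)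

/-- ℓ-terms: `P^ℓ ::= (a ∧❛ P^T) ∨❛ P^F | (¬a ∧❛ P^T) ∨❛ P^F`. -/
inductive IsLTerm {A : Type} : STerm A → Prop
  | pos (a : A) {P Q} : IsTTerm P → IsFTerm Q → IsLTerm (.or (.and (.atom a) P) Q)
  | neg (a : A) {P Q} : IsTTerm P → IsFTerm Q → IsLTerm (.or (.and (.neg (.atom a)) P) Q)

mutual
/-- The category `P^c ::= P^ℓ | P^* ∧❛ P^d`. -/
inductive IsCTerm {A : Type} : STerm A → Prop
  | ell {P} : IsLTerm P → IsCTerm P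
  | and {P Q} : IsStarTerm P → IsDTerm Q → IsCTerm (.and P Q)

/-- The category `P^d ::= P^ℓ | P^* ∨❛ P^c`. -/
inductive IsDTerm {A : Type} : STerm A → Prop
  | ell {P} : IsLTerm P → IsDTerm P
  | or {P Q} : IsStarTerm P → IsCTerm Q → IsDTerm (.or P Q)

/-- *-terms: `P^* ::= P^c | P^d`. -/
inductive IsStarTerm {A : Type} : STerm A → Prop
  | c {P} : IsCTerm P → IsStarTerm P
  | d {P} : IsDTerm P → IsStarTerm P
end

/-- SCL Normal Forms: `P ::= P^T | P^F | P^T ∧❛ P^*`. -/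
def IsSNF {A : Type} (P : STerm A) : Prop :=
  IsTTerm P ∨ IsFTerm P ∨ ∃ Q R : STerm A, IsTTerm Q ∧ IsStarTerm R ∧ P = .and Q R

section Lemmas
variable {A : Type}

theorem negT : EqFSCL (STerm.neg (.tt) : STerm A) .ff := .symm .F1

theorem negF : EqFSCL (STerm.neg (.ff) : STerm A) .tt :=
  (EqFSCL.neg_congr .F1).trans (.F3 _)

theorem dm2 (X Y : STerm A) :
    EqFSCL ((X.or Y).neg) ((X.neg).and (Y.neg)) :=
  (EqFSCL.neg_congr (.F2 X Y)).trans (.F3 _)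

theorem dm1 (X Y : STerm A) :
    EqFSCL ((X.and Y).neg) ((X.neg).or (Y.neg)) :=
  .symm ((EqFSCL.F2 _ _).trans
    (EqFSCL.neg_congr (EqFSCL.and_congr (.F3 X) (.F3 Y))))

theorem xAndT (X : STerm A) : EqFSCL (X.and .tt) X :=
  (EqFSCL.symm (.F3 _)).trans
    ((EqFSCL.neg_congr ((dm1 X .tt).trans
      ((EqFSCL.or_congr (.refl _) negT).trans (.F5 _)))).trans (.F3 X))

theorem fOrX (X : STerm A) : EqFSCL ((STerm.ff).or X) X :=
  (EqFSCL.F2 _ _).trans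
    ((EqFSCL.neg_congr ((EqFSCL.and_congr negF (.refl _)).trans (.F4 _))).trans (.F3 X))

theorem tOrX (X : STerm A) : EqFSCL ((STerm.tt).or X) .tt :=
  (EqFSCL.F2 _ _).trans
    ((EqFSCL.neg_congr ((EqFSCL.and_congr negT (.refl _)).trans (.F6 _))).trans negF)

theorem orAssoc (X Y Z : STerm A) : EqFSCL ((X.or Y).or Z) (X.or (Y.or Z)) :=
  (EqFSCL.F2 _ _).trans <|
    ((EqFSCL.neg_congr ((EqFSCL.and_congr (dm2 X Y) (.refl _)).trans
      ((EqFSCL.F7 _ _ _).trans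
        (EqFSCL.and_congr (.refl _) (.symm (dm2 Y Z)))))).trans
      (.symm (.F2 _ _)))

theorem F8d (X : STerm A) : EqFSCL ((X.neg).or .tt) (X.or .tt) :=
  ((EqFSCL.or_congr (.refl _) (.symm negF)).trans
    ((EqFSCL.symm (dm1 X .ff)).trans
      ((EqFSCL.neg_congr (.symm (.F8 X))).trans
        ((dm1 _ _).trans
          (EqFSCL.or_congr (.F3 X) negF)))))

theorem F10d (X Y Z : STerm A) :
    EqFSCL ((X.or Y).and (Z.or .tt))
      ((X.and (Z.or .tt)).or (Y.and (Z.or .tt))) := by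
  have h1 : EqFSCL (((X.or Y).and (Z.or .tt)).neg)
      (((X.neg).and (Y.neg)).or ((Z.neg).and .ff)) :=
    (dm1 _ _).trans (EqFSCL.or_congr (dm2 X Y)
      ((dm2 Z .tt).trans (EqFSCL.and_congr (.refl _) negT)))
  have h2 := h1.trans (EqFSCL.F10 (X.neg) (Y.neg) (Z.neg))
  have h3 := (EqFSCL.symm (.F3 _)).trans (EqFSCL.neg_congr h2)
  refine h3.trans ?_
  have hzf : EqFSCL (((Z.neg).and .ff).neg) (Z.or .tt) :=
    (dm1 _ _).trans (EqFSCL.or_congr (.F3 Z) negF)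
  exact (dm1 _ _).trans (EqFSCL.or_congr
    ((dm2 _ _).trans (EqFSCL.and_congr (.F3 X) hzf))
    ((dm2 _ _).trans (EqFSCL.and_congr (.F3 Y) hzf)))

end Lemmas

section Main
variable {A : Type}

theorem star3 (X Y Z : STerm A) :
    EqFSCL ((X.or (Y.and .ff)).and (Z.or .tt))
      ((X.and (Z.or .tt)).or (Y.and .ff)) :=
  (EqFSCL.trans (EqFSCL.trans (EqFSCL.and_congr (EqFSCL.refl _) (EqFSCL.or_congr (EqFSCL.refl _) (EqFSCL.symm (tOrX (STerm.and Y (STerm.ff)))))) (EqFSCL.and_congr (EqFSCL.refl _) (EqFSCL.symm (orAssoc Z (STerm.tt) (STerm.and Y (STerm.ff)))))) (EqFSCL.symm (EqFSCL.F10 X (STerm.or Z (STerm.tt)) Y)))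

theorem star1 (x y z : STerm A) :
    EqFSCL (STerm.and (STerm.or (STerm.neg x) (STerm.and y (STerm.ff))) (STerm.and z (STerm.ff))) (STerm.and (STerm.or x (STerm.and z (STerm.ff))) (STerm.and y (STerm.ff))) :=
  (EqFSCL.trans (EqFSCL.trans (EqFSCL.trans (EqFSCL.trans (EqFSCL.trans (EqFSCL.trans (EqFSCL.trans (EqFSCL.trans (EqFSCL.trans (EqFSCL.trans (EqFSCL.trans (EqFSCL.trans (EqFSCL.trans (EqFSCL.trans (EqFSCL.trans (EqFSCL.and_congr (EqFSCL.or_congr (EqFSCL.refl _) (EqFSCL.symm (EqFSCL.F8 y))) (EqFSCL.refl _)) (EqFSCL.and_congr (EqFSCL.or_congr (EqFSCL.refl _) (EqFSCL.and_congr (EqFSCL.refl _) (EqFSCL.F1))) (EqFSCL.refl _))) (EqFSCL.and_congr (EqFSCL.or_congr (EqFSCL.refl _) (EqFSCL.symm (dm2 y (STerm.tt)))) (EqFSCL.refl _))) (EqFSCL.and_congr (EqFSCL.symm (dm1 x (STerm.or y (STerm.tt)))) (EqFSCL.refl _))) (EqFSCL.and_congr (EqFSCL.refl _) (EqFSCL.and_congr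 (EqFSCL.refl _) (EqFSCL.symm (EqFSCL.F4 (STerm.ff)))))) (EqFSCL.and_congr (EqFSCL.refl _) (EqFSCL.and_congr (EqFSCL.refl _) (EqFSCL.and_congr (EqFSCL.symm (negF)) (EqFSCL.refl _))))) (EqFSCL.and_congr (EqFSCL.refl _) (EqFSCL.and_congr (EqFSCL.refl _) (EqFSCL.F8 (STerm.ff))))) (EqFSCL.and_congr (EqFSCL.refl _) (EqFSCL.symm (EqFSCL.F7 z (STerm.ff) (STerm.ff))))) (EqFSCL.and_congr (EqFSCL.refl _) (EqFSCL.symm (EqFSCL.F8 (STerm.and z (STerm.ff)))))) (EqFSCL.symm (EqFSCL.F7 (STerm.neg (STerm.and x (STerm.or y (STerm.tt)))) (STerm.neg (STerm.and z (STerm.ff))) (STerm.ff)))) (EqFSCL.and_congr (EqFSCL.symm (dm2 (STerm.and x (STerm.or y (STerm.tt))) (STerm.and z (STerm.ff)))) (EqFSCL.refl _))) (EqFSCL.F8 (STerm.or (STerm.and x (STerm.or y (STerm.tt))) (STerm.and z (STerm.ff))))) (EqFSCL.and_congr (EqFSCL.symm (star3 x z y)) (EqFSCL.refl _))) (EqFSCL.F7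 (STerm.or x (STerm.and z (STerm.ff))) (STerm.or y (STerm.tt)) (STerm.ff))) (EqFSCL.and_congr (EqFSCL.refl _) (EqFSCL.symm (EqFSCL.F9 y (STerm.ff))))) (EqFSCL.and_congr (EqFSCL.refl _) (EqFSCL.F5 (STerm.and y (STerm.ff)))))

theorem star1d (x y z : STerm A) :
    EqFSCL (STerm.or (STerm.and (STerm.neg x) (STerm.or y (STerm.tt))) (STerm.or z (STerm.tt))) (STerm.or (STerm.and x (STerm.or z (STerm.tt))) (STerm.or y (STerm.tt))) :=
  (EqFSCL.trans (EqFSCL.trans (EqFSCL.trans (EqFSCL.trans (EqFSCL.trans (EqFSCL.trans (EqFSCL.trans (EqFSCL.trans (EqFSCL.trans (EqFSCL.trans (EqFSCL.trans (EqFSCL.trans (EqFSCL.trans (EqFSCL.trans (EqFSCL.trans (EqFSCL.trans (EqFSCL.trans (EqFSCL.or_congr (EqFSCL.and_congr (EqFSCL.refl _) (EqFSCL.symm (F8d y))) (EqFSCL.refl _)) (EqFSCL.or_congr (EqFSCL.and_congr (EqFSCL.refl _) (EqFSCL.or_congr (EqFSCL.refl _) (EqFSCL.symm (negF)))) (EqFSCL.refl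 _))) (EqFSCL.or_congr (EqFSCL.and_congr (EqFSCL.refl _) (EqFSCL.symm (dm1 y (STerm.ff)))) (EqFSCL.refl _))) (EqFSCL.or_congr (EqFSCL.symm (dm2 x (STerm.and y (STerm.ff)))) (EqFSCL.refl _))) (EqFSCL.or_congr (EqFSCL.refl _) (EqFSCL.symm (F8d z)))) (EqFSCL.or_congr (EqFSCL.refl _) (EqFSCL.or_congr (EqFSCL.refl _) (EqFSCL.symm (negF))))) (EqFSCL.or_congr (EqFSCL.refl _) (EqFSCL.symm (dm1 z (STerm.ff))))) (EqFSCL.symm (dm1 (STerm.or x (STerm.and y (STerm.ff))) (STerm.and z (STerm.ff))))) (EqFSCL.neg_congr (EqFSCL.and_congr (EqFSCL.refl _) (EqFSCL.symm (EqFSCL.F5 (STerm.and z (STerm.ff))))))) (EqFSCL.neg_congr (EqFSCL.and_congr (EqFSCL.refl _) (EqFSCL.F9 z (STerm.ff))))) (EqFSCL.neg_congr (EqFSCL.symm (EqFSCL.F7 (STerm.or x (STerm.and y (STerm.ff))) (STerm.or z (STerm.tt)) (STerm.ff))))) (EqFSCL.neg_congr (EqFSCL.and_congr (star3 x y z) (EqFSCL.refl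 _)))) (dm1 (STerm.or (STerm.and x (STerm.or z (STerm.tt))) (STerm.and y (STerm.ff))) (STerm.ff))) (EqFSCL.or_congr (EqFSCL.refl _) (negF))) (F8d (STerm.or (STerm.and x (STerm.or z (STerm.tt))) (STerm.and y (STerm.ff))))) (orAssoc (STerm.and x (STerm.or z (STerm.tt))) (STerm.and y (STerm.ff)) (STerm.tt))) (EqFSCL.or_congr (EqFSCL.refl _) (EqFSCL.F9 y (STerm.tt)))) (EqFSCL.or_congr (EqFSCL.refl _) (xAndT (STerm.or y (STerm.tt)))))

theorem star5 (x y z w : STerm A) :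
    EqFSCL (STerm.and (STerm.or (STerm.and x (STerm.or y (STerm.tt))) (STerm.and z (STerm.ff))) (STerm.and w (STerm.ff))) (STerm.and (STerm.or x (STerm.and z (STerm.ff))) (STerm.and (STerm.or y (STerm.tt)) (STerm.and w (STerm.ff)))) :=
  (EqFSCL.trans (EqFSCL.and_congr (EqFSCL.symm (star3 x z y)) (EqFSCL.refl _)) (EqFSCL.F7 (STerm.or x (STerm.and z (STerm.ff))) (STerm.or y (STerm.tt)) (STerm.and w (STerm.ff))))

/-- `(Z∧F)∨(W∧F) = ((Z∨T)∧W)∧F` -/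
theorem ffow (Z W : STerm A) :
    EqFSCL ((Z.and .ff).or (W.and .ff)) (((Z.or .tt).and W).and .ff) :=
  (EqFSCL.F9 Z (W.and .ff)).trans (EqFSCL.symm (EqFSCL.F7 (Z.or .tt) W .ff))

theorem star6 (X Y Z W : STerm A) :
    EqFSCL (((X.neg.and (Y.or .tt)).or (Z.and .ff)).and (W.and .ff))
      ((X.or ((Y.or .tt).and (W.and .ff))).and (Z.and .ff)) :=
  (star5 X.neg Y Z W).trans
    ((EqFSCL.and_congr (EqFSCL.refl _) (EqFSCL.symm (EqFSCL.F7 (Y.or .tt) W .ff))).trans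
      ((star1 X Z ((Y.or .tt).and W)).trans
        (EqFSCL.and_congr (EqFSCL.or_congr (EqFSCL.refl _) (EqFSCL.F7 (Y.or .tt) W .ff))
          (EqFSCL.refl _))))

theorem star12 (X Y Z W U : STerm A) :
    EqFSCL ((((X.and (Y.or .tt)).or (Z.and .ff)).or (W.and .ff)).and (U.and .ff))
      ((X.or ((Z.and .ff).or (W.and .ff))).and ((Y.or .tt).and (U.and .ff))) :=
  (EqFSCL.and_congr (orAssoc (X.and (Y.or .tt)) (Z.and .ff) (W.and .ff)) (EqFSCL.refl _)).trans
    ((EqFSCL.and_congr (EqFSCL.or_congr (EqFSCL.refl _) (ffow Z W)) (EqFSCL.refl _)).trans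
      ((star5 X Y ((Z.or .tt).and W) U).trans
        (EqFSCL.and_congr (EqFSCL.or_congr (EqFSCL.refl _) (EqFSCL.symm (ffow Z W)))
          (EqFSCL.refl _))))

theorem star13 (X Y Z W U : STerm A) :
    EqFSCL ((((X.neg.and (Y.or .tt)).or (Z.and .ff)).or (W.and .ff)).and (U.and .ff))
      ((X.or ((Y.or .tt).and (U.and .ff))).and ((Z.and .ff).or (W.and .ff))) :=
  (star12 X.neg Y Z W U).trans
    ((EqFSCL.and_congr (EqFSCL.or_congr (EqFSCL.refl _) (ffow Z W))
        (EqFSCL.symm (EqFSCL.F7 (Y.or .tt) U .ff))).trans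
      ((star1 X ((Z.or .tt).and W) ((Y.or .tt).and U)).trans
        (EqFSCL.and_congr (EqFSCL.or_congr (EqFSCL.refl _) (EqFSCL.F7 (Y.or .tt) U .ff))
          (EqFSCL.symm (ffow Z W)))))

theorem orAndF {X Y : STerm A} :
    EqFSCL ((X.or Y).and .ff) (X.neg.and (Y.and .ff)) :=
  (EqFSCL.and_congr (.F2 X Y) (.refl _)).trans
    ((EqFSCL.F8 ((X.neg).and (Y.neg))).trans
      ((EqFSCL.F7 _ _ _).trans (EqFSCL.and_congr (.refl _) (.F8 Y))))

theorem keyG (x y w : STerm A) :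
    EqFSCL (((x.neg.and y.neg).or w).and .ff)
      (((x.and (w.or .tt)).or (y.and w)).and .ff) :=
  (EqFSCL.trans (EqFSCL.trans (EqFSCL.trans (EqFSCL.trans (EqFSCL.trans (EqFSCL.trans (EqFSCL.trans (EqFSCL.trans (EqFSCL.trans (EqFSCL.trans (EqFSCL.trans (EqFSCL.trans (EqFSCL.and_congr (EqFSCL.or_congr (EqFSCL.symm (dm2 x y)) (EqFSCL.refl _)) (EqFSCL.refl _)) (orAndF)) (EqFSCL.and_congr (EqFSCL.F3 (STerm.or x y)) (EqFSCL.refl _))) (EqFSCL.and_congr (EqFSCL.refl _) (EqFSCL.symm (EqFSCL.F5 (STerm.and w (STerm.ff)))))) (EqFSCL.and_congr (EqFSCL.refl _) (EqFSCL.F9 w (STerm.ff)))) (EqFSCL.symm (EqFSCL.F7 (STerm.or x y) (STerm.or w (STerm.tt)) (STerm.ff)))) (EqFSCL.and_congr (F10d x y w) (EqFSCL.refl _))) (orAndF)) (EqFSCL.and_congr (EqFSCL.refl _) (EqFSCL.F7 y (STerm.or w (STerm.tt)) (STerm.ff)))) (EqFSCL.and_congr (EqFSCL.refl _) (EqFSCL.and_congr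 (EqFSCL.refl _) (EqFSCL.symm (EqFSCL.F9 w (STerm.ff)))))) (EqFSCL.and_congr (EqFSCL.refl _) (EqFSCL.and_congr (EqFSCL.refl _) (EqFSCL.F5 (STerm.and w (STerm.ff)))))) (EqFSCL.and_congr (EqFSCL.refl _) (EqFSCL.symm (EqFSCL.F7 y w (STerm.ff))))) (EqFSCL.symm (orAndF)))

/-- the absorption law -/
theorem i25 (X Y W : STerm A) :
    EqFSCL ((X.or Y).and (W.and .ff))
      ((X.or (Y.and (W.and .ff))).and (W.and .ff)) :=
  (EqFSCL.and_congr (.F2 X Y) (.refl _)).trans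
    ((EqFSCL.symm orAndF).trans
      ((keyG X Y W).trans
        (orAndF.trans
          ((EqFSCL.and_congr
              ((dm1 _ _).trans (EqFSCL.or_congr (.refl _)
                ((dm2 W .tt).trans
                  ((EqFSCL.and_congr (.refl _) negT).trans (.F8 W)))))
              (.refl _)).trans
            ((star1 X W (Y.and W)).trans
              (EqFSCL.and_congr
                (EqFSCL.or_congr (.refl _) (.F7 Y W .ff)) (.refl _)))))))

/-- T-terms absorb a final `∨ T`. -/
theorem tOrT {t : STerm A} (h : IsTTerm t) : EqFSCL (t.or .tt) t := by
  induction h with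
  | tt => exact tOrX .tt
  | node a hP hQ ihP ihQ =>
    exact (orAssoc _ _ _).trans (EqFSCL.or_congr (.refl _) ihQ)

/-- F-terms absorb a final `∧ F`. -/
theorem fAndF {f : STerm A} (h : IsFTerm f) : EqFSCL (f.and .ff) f := by
  induction h with
  | ff => exact .F6 .ff
  | node a hP hQ ihP ihQ =>
    exact (EqFSCL.F7 _ _ _).trans (EqFSCL.and_congr (.refl _) ihQ)

theorem i12 {t : STerm A} (h : IsTTerm t) (y : STerm A) :
    EqFSCL (t.and y) ((t.and .ff).or y) :=
  (EqFSCL.and_congr (.symm (tOrT h)) (.refl _)).trans (.symm (.F9 t y))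

theorem i2 {t : STerm A} (h : IsTTerm t) (y : STerm A) :
    EqFSCL ((t.and y).neg) (t.and y.neg) :=
  (EqFSCL.neg_congr (i12 h y)).trans
    ((dm2 _ _).trans
      (EqFSCL.and_congr
        ((dm1 t .ff).trans ((EqFSCL.or_congr (.refl _) negF).trans
          ((F8d t).trans (tOrT h)))) (.refl _)))

theorem i13 {f : STerm A} (h : IsFTerm f) (y : STerm A) : EqFSCL (f.and y) f :=
  (EqFSCL.and_congr (.symm (fAndF h)) (.refl _)).trans
    ((EqFSCL.F7 f .ff y).trans
      ((EqFSCL.and_congr (.refl _) (.F6 y)).trans (fAndF h)))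

/-- conjunction of T-terms -/
theorem tand {t : STerm A} (ht : IsTTerm t) :
    ∀ {u : STerm A}, IsTTerm u → ∃ s, IsTTerm s ∧ EqFSCL (t.and u) s := by
  induction ht with
  | tt => exact fun hu => ⟨_, hu, .F4 _⟩
  | @node a P Q hP hQ ihP ihQ =>
    intro u hu
    obtain ⟨p, hp, ep⟩ := ihP hu
    obtain ⟨q, hq, eq'⟩ := ihQ hu
    refine ⟨((STerm.atom a).and p).or q, .node a hp hq, ?_⟩
    exact (EqFSCL.and_congr (.refl _) (.symm (tOrT hu))).trans
      ((F10d ((STerm.atom a).and P) Q u).trans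
        ((EqFSCL.or_congr (EqFSCL.and_congr (.refl _) (tOrT hu))
            (EqFSCL.and_congr (.refl _) (tOrT hu))).trans
          ((EqFSCL.or_congr (EqFSCL.F7 _ _ _) (.refl _)).trans
            (EqFSCL.or_congr (EqFSCL.and_congr (.refl _) ep) eq'))))

/-- negation of a T-term is an F-term -/
theorem negTTerm {t : STerm A} (h : IsTTerm t) :
    ∃ f, IsFTerm f ∧ EqFSCL t.neg f := by
  induction h with
  | tt => exact ⟨.ff, .ff, negT⟩
  | @node a P Q hP hQ ihP ihQ =>
    obtain ⟨p, hp, ep⟩ := ihP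
    obtain ⟨q, hq, eq'⟩ := ihQ
    refine ⟨((STerm.atom a).or q).and p, .node a hq hp, ?_⟩
    exact ((dm2 _ _).trans
        (EqFSCL.and_congr ((dm1 _ _).trans (EqFSCL.or_congr (.refl _) ep)) eq')).trans
      ((EqFSCL.and_congr (EqFSCL.or_congr (.refl _) (.symm (fAndF hp)))
          (.symm (fAndF hq))).trans
        ((star1 (.atom a) p q).trans
          (EqFSCL.and_congr (EqFSCL.or_congr (.refl _) (fAndF hq)) (fAndF hp))))

/-- negation of an F-term is a T-term -/
theorem negFTerm {f : STerm A} (h : IsFTerm f) :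
    ∃ t, IsTTerm t ∧ EqFSCL f.neg t := by
  induction h with
  | ff => exact ⟨.tt, .tt, negF⟩
  | @node a P Q hP hQ ihP ihQ =>
    obtain ⟨p, hp, ep⟩ := ihP
    obtain ⟨q, hq, eq'⟩ := ihQ
    refine ⟨((STerm.atom a).and q).or p, .node a hq hp, ?_⟩
    exact ((dm1 _ _).trans
        (EqFSCL.or_congr ((dm2 _ _).trans (EqFSCL.and_congr (.refl _) ep)) eq')).trans
      ((EqFSCL.or_congr (EqFSCL.and_congr (.refl _) (.symm (tOrT hp)))
          (.symm (tOrT hq))).trans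
        ((star1d (.atom a) p q).trans
          (EqFSCL.or_congr (EqFSCL.and_congr (.refl _) (tOrT hq)) (tOrT hp))))

/-- T-term ∧ F-term is an F-term -/
theorem tfand {t f : STerm A} (ht : IsTTerm t) (hf : IsFTerm f) :
    ∃ g, IsFTerm g ∧ EqFSCL (t.and f) g := by
  obtain ⟨t2, ht2, e2⟩ := negFTerm hf
  obtain ⟨t3, ht3, e3⟩ := tand ht ht2
  obtain ⟨g, hg, e4⟩ := negTTerm ht3
  have h5 : EqFSCL ((t.and f).neg) t3 :=
    (i2 ht f).trans ((EqFSCL.and_congr (.refl _) e2).trans e3)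
  exact ⟨g, hg, (EqFSCL.symm (.F3 _)).trans ((EqFSCL.neg_congr h5).trans e4)⟩

/-- negation of an ℓ-term -/
theorem negL {s : STerm A} (h : IsLTerm s) :
    ∃ s', IsLTerm s' ∧ EqFSCL s.neg s' := by
  cases h with
  | @pos a P Q hP hQ =>
    obtain ⟨p, hp, ep⟩ := negTTerm hP
    obtain ⟨q, hq, eq'⟩ := negFTerm hQ
    refine ⟨((STerm.atom a).neg.and q).or p, .neg a hq hp, ?_⟩
    exact ((dm2 _ _).trans
        (EqFSCL.and_congr ((dm1 _ _).trans (EqFSCL.or_congr (.refl _) ep)) eq')).trans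
      ((EqFSCL.and_congr (EqFSCL.or_congr (.refl _) (.symm (fAndF hp)))
          (.symm (tOrT hq))).trans
        ((star3 (STerm.atom a).neg p q).trans
          (EqFSCL.or_congr (EqFSCL.and_congr (.refl _) (tOrT hq)) (fAndF hp))))
  | @neg a P Q hP hQ =>
    obtain ⟨p, hp, ep⟩ := negTTerm hP
    obtain ⟨q, hq, eq'⟩ := negFTerm hQ
    refine ⟨((STerm.atom a).and q).or p, .pos a hq hp, ?_⟩
    exact ((dm2 _ _).trans
        (EqFSCL.and_congr ((dm1 _ _).trans
          (EqFSCL.or_congr (.F3 _) ep)) eq')).trans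
      ((EqFSCL.and_congr (EqFSCL.or_congr (.refl _) (.symm (fAndF hp)))
          (.symm (tOrT hq))).trans
        ((star3 (STerm.atom a) p q).trans
          (EqFSCL.or_congr (EqFSCL.and_congr (.refl _) (tOrT hq)) (fAndF hp))))

theorem negCase1 {P : STerm A} (l : IsLTerm P) :
    ∃ s', IsDTerm s' ∧ EqFSCL P.neg s' :=
  let ⟨s', h, e⟩ := negL l; ⟨s', .ell h, e⟩

theorem negCase3 {P : STerm A} (l : IsLTerm P) :
    ∃ s', IsCTerm s' ∧ EqFSCL P.neg s' :=
  let ⟨s', h, e⟩ := negL l; ⟨s', .ell h, e⟩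

theorem negCase2 {P Q : STerm A} (_ : IsStarTerm P) (_ : IsDTerm Q)
    (ih1 : ∃ s', IsStarTerm s' ∧ EqFSCL P.neg s')
    (ih2 : ∃ s', IsCTerm s' ∧ EqFSCL Q.neg s') :
    ∃ s', IsDTerm s' ∧ EqFSCL (P.and Q).neg s' :=
  let ⟨u', hu', eu⟩ := ih1
  let ⟨v', hv', ev⟩ := ih2
  ⟨u'.or v', .or hu' hv', (dm1 _ _).trans (EqFSCL.or_congr eu ev)⟩

theorem negCase4 {P Q : STerm A} (_ : IsStarTerm P) (_ : IsCTerm Q)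
    (ih1 : ∃ s', IsStarTerm s' ∧ EqFSCL P.neg s')
    (ih2 : ∃ s', IsDTerm s' ∧ EqFSCL Q.neg s') :
    ∃ s', IsCTerm s' ∧ EqFSCL (P.or Q).neg s' :=
  let ⟨u', hu', eu⟩ := ih1
  let ⟨v', hv', ev⟩ := ih2
  ⟨u'.and v', .and hu' hv', (dm2 _ _).trans (EqFSCL.and_congr eu ev)⟩

theorem negCase5 {P : STerm A} (_ : IsCTerm P)
    (ih : ∃ s', IsDTerm s' ∧ EqFSCL P.neg s') :
    ∃ s', IsStarTerm s' ∧ EqFSCL P.neg s' :=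
  let ⟨s', h, e⟩ := ih; ⟨s', .d h, e⟩

theorem negCase6 {P : STerm A} (_ : IsDTerm P)
    (ih : ∃ s', IsCTerm s' ∧ EqFSCL P.neg s') :
    ∃ s', IsStarTerm s' ∧ EqFSCL P.neg s' :=
  let ⟨s', h, e⟩ := ih; ⟨s', .c h, e⟩

theorem negC {s : STerm A} (h : IsCTerm s) : ∃ s', IsDTerm s' ∧ EqFSCL s.neg s' :=
  IsCTerm.rec (motive_1 := fun s _ => ∃ s', IsDTerm s' ∧ EqFSCL s.neg s')
    (motive_2 := fun s _ => ∃ s', IsCTerm s' ∧ EqFSCL s.neg s')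
    (motive_3 := fun s _ => ∃ s', IsStarTerm s' ∧ EqFSCL s.neg s')
    (fun l => negCase1 l) (fun a b c d => negCase2 a b c d)
    (fun l => negCase3 l) (fun a b c d => negCase4 a b c d)
    (fun a b => negCase5 a b) (fun a b => negCase6 a b) h

theorem negD {s : STerm A} (h : IsDTerm s) : ∃ s', IsCTerm s' ∧ EqFSCL s.neg s' :=
  IsDTerm.rec (motive_1 := fun s _ => ∃ s', IsDTerm s' ∧ EqFSCL s.neg s')
    (motive_2 := fun s _ => ∃ s', IsCTerm s' ∧ EqFSCL s.neg s')
    (motive_3 := fun s _ => ∃ s', IsStarTerm s' ∧ EqFSCL s.neg s')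
    (fun l => negCase1 l) (fun a b c d => negCase2 a b c d)
    (fun l => negCase3 l) (fun a b c d => negCase4 a b c d)
    (fun a b => negCase5 a b) (fun a b => negCase6 a b) h

theorem negS {s : STerm A} (h : IsStarTerm s) : ∃ s', IsStarTerm s' ∧ EqFSCL s.neg s' :=
  IsStarTerm.rec (motive_1 := fun s _ => ∃ s', IsDTerm s' ∧ EqFSCL s.neg s')
    (motive_2 := fun s _ => ∃ s', IsCTerm s' ∧ EqFSCL s.neg s')
    (motive_3 := fun s _ => ∃ s', IsStarTerm s' ∧ EqFSCL s.neg s')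
    (fun l => negCase1 l) (fun a b c d => negCase2 a b c d)
    (fun l => negCase3 l) (fun a b c d => negCase4 a b c d)
    (fun a b => negCase5 a b) (fun a b => negCase6 a b) h

/-- ℓ-term ∧ T-term -/
theorem sandL {s : STerm A} (h : IsLTerm s) {t : STerm A} (ht : IsTTerm t) :
    ∃ l, IsLTerm l ∧ EqFSCL (s.and t) l := by
  cases h with
  | @pos a P Q hP hQ =>
    obtain ⟨u, hu, eu⟩ := tand hP ht
    refine ⟨((STerm.atom a).and u).or Q, .pos a hu hQ, ?_⟩
    exact (EqFSCL.and_congr (EqFSCL.or_congr (.refl _) (.symm (fAndF hQ)))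
        (.symm (tOrT ht))).trans
      ((star3 ((STerm.atom a).and P) Q t).trans
        ((EqFSCL.or_congr (EqFSCL.and_congr (.refl _) (tOrT ht)) (fAndF hQ)).trans
          ((EqFSCL.or_congr (EqFSCL.F7 _ _ _) (.refl _)).trans
            (EqFSCL.or_congr (EqFSCL.and_congr (.refl _) eu) (.refl _)))))
  | @neg a P Q hP hQ =>
    obtain ⟨u, hu, eu⟩ := tand hP ht
    refine ⟨((STerm.atom a).neg.and u).or Q, .neg a hu hQ, ?_⟩
    exact (EqFSCL.and_congr (EqFSCL.or_congr (.refl _) (.symm (fAndF hQ)))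
        (.symm (tOrT ht))).trans
      ((star3 ((STerm.atom a).neg.and P) Q t).trans
        ((EqFSCL.or_congr (EqFSCL.and_congr (.refl _) (tOrT ht)) (fAndF hQ)).trans
          ((EqFSCL.or_congr (EqFSCL.F7 _ _ _) (.refl _)).trans
            (EqFSCL.or_congr (EqFSCL.and_congr (.refl _) eu) (.refl _)))))

theorem sandCase1 {P : STerm A} (l : IsLTerm P) :
    ∀ {t : STerm A}, IsTTerm t → ∃ c, IsCTerm c ∧ EqFSCL (P.and t) c :=
  fun ht => let ⟨l', hl, e⟩ := sandL l ht; ⟨l', .ell hl, e⟩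

theorem sandCase3 {P : STerm A} (l : IsLTerm P) :
    ∀ {t : STerm A}, IsTTerm t → ∃ d, IsDTerm d ∧ EqFSCL (P.and t) d :=
  fun ht => let ⟨l', hl, e⟩ := sandL l ht; ⟨l', .ell hl, e⟩

theorem sandCase2 {P Q : STerm A} (hP : IsStarTerm P) (_ : IsDTerm Q)
    (_ : ∀ {t : STerm A}, IsTTerm t → ∃ u, IsStarTerm u ∧ EqFSCL (P.and t) u)
    (ih2 : ∀ {t : STerm A}, IsTTerm t → ∃ d, IsDTerm d ∧ EqFSCL (Q.and t) d) :
    ∀ {t : STerm A}, IsTTerm t → ∃ c, IsCTerm c ∧ EqFSCL ((P.and Q).and t) c :=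
  fun ht =>
    let ⟨d', hd', e⟩ := ih2 ht
    ⟨P.and d', .and hP hd', (EqFSCL.F7 _ _ _).trans (EqFSCL.and_congr (.refl _) e)⟩

theorem sandCase4 {P Q : STerm A} (_ : IsStarTerm P) (_ : IsCTerm Q)
    (ih1 : ∀ {t : STerm A}, IsTTerm t → ∃ u, IsStarTerm u ∧ EqFSCL (P.and t) u)
    (ih2 : ∀ {t : STerm A}, IsTTerm t → ∃ c, IsCTerm c ∧ EqFSCL (Q.and t) c) :
    ∀ {t : STerm A}, IsTTerm t → ∃ d, IsDTerm d ∧ EqFSCL ((P.or Q).and t) d :=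
  fun {t} ht =>
    let ⟨u, hu, eu⟩ := ih1 ht
    let ⟨c, hc, ec⟩ := ih2 ht
    ⟨u.or c, .or hu hc,
      (EqFSCL.and_congr (.refl _) (.symm (tOrT ht))).trans
        ((F10d P Q t).trans
          ((EqFSCL.or_congr (EqFSCL.and_congr (.refl _) (tOrT ht))
              (EqFSCL.and_congr (.refl _) (tOrT ht))).trans
            (EqFSCL.or_congr eu ec)))⟩

theorem sandCase5 {P : STerm A} (_ : IsCTerm P)
    (ih : ∀ {t : STerm A}, IsTTerm t → ∃ c, IsCTerm c ∧ EqFSCL (P.and t) c) :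
    ∀ {t : STerm A}, IsTTerm t → ∃ u, IsStarTerm u ∧ EqFSCL (P.and t) u :=
  fun ht => let ⟨c, hc, e⟩ := ih ht; ⟨c, .c hc, e⟩

theorem sandCase6 {P : STerm A} (_ : IsDTerm P)
    (ih : ∀ {t : STerm A}, IsTTerm t → ∃ d, IsDTerm d ∧ EqFSCL (P.and t) d) :
    ∀ {t : STerm A}, IsTTerm t → ∃ u, IsStarTerm u ∧ EqFSCL (P.and t) u :=
  fun ht => let ⟨d, hd, e⟩ := ih ht; ⟨d, .d hd, e⟩

theorem sandS {s : STerm A} (h : IsStarTerm s) {t : STerm A} (ht : IsTTerm t) :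
    ∃ u, IsStarTerm u ∧ EqFSCL (s.and t) u :=
  IsStarTerm.rec
    (motive_1 := fun s _ => ∀ {t : STerm A}, IsTTerm t → ∃ c, IsCTerm c ∧ EqFSCL (s.and t) c)
    (motive_2 := fun s _ => ∀ {t : STerm A}, IsTTerm t → ∃ d, IsDTerm d ∧ EqFSCL (s.and t) d)
    (motive_3 := fun s _ => ∀ {t : STerm A}, IsTTerm t → ∃ u, IsStarTerm u ∧ EqFSCL (s.and t) u)
    (fun l => sandCase1 l) (fun a b c d => sandCase2 a b c d)
    (fun l => sandCase3 l) (fun a b c d => sandCase4 a b c d)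
    (fun a b => sandCase5 a b) (fun a b => sandCase6 a b) h ht

/-- F-term ∨ F-term -/
theorem forf {q : STerm A} (hq : IsFTerm q) :
    ∀ {B : STerm A}, IsFTerm B → ∃ g, IsFTerm g ∧ EqFSCL (q.or B) g := by
  induction hq with
  | ff => exact fun hB => ⟨_, hB, fOrX _⟩
  | @node a P Q hP hQ ihP ihQ =>
    intro B hB
    obtain ⟨g1, hg1, e1⟩ := ihP hB
    obtain ⟨g2, hg2, e2⟩ := ihQ hB
    refine ⟨((STerm.atom a).or g1).and g2, .node a hg1 hg2, ?_⟩
    exact (EqFSCL.or_congr (.refl _) (.symm (fAndF hB))).trans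
      ((EqFSCL.F10 ((STerm.atom a).or P) Q B).trans
        ((EqFSCL.and_congr (EqFSCL.or_congr (.refl _) (fAndF hB))
            (EqFSCL.or_congr (.refl _) (fAndF hB))).trans
          ((EqFSCL.and_congr (orAssoc _ _ _) (.refl _)).trans
            (EqFSCL.and_congr (EqFSCL.or_congr (.refl _) e1) e2))))

/-- (ℓ ∨ B) ∧ f for F-terms B, f -/
theorem outL {s : STerm A} (h : IsLTerm s) :
    ∀ {f B : STerm A}, IsFTerm f → IsFTerm B →
      ∃ g, IsFTerm g ∧ EqFSCL ((s.or B).and f) g := by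
  cases h with
  | @pos a P Q hP hQ =>
    intro f B hf hB
    obtain ⟨g1, hg1, e1⟩ := forf hQ hB
    obtain ⟨g2, hg2, e2⟩ := tfand hP hf
    refine ⟨((STerm.atom a).or g1).and g2, .node a hg1 hg2, ?_⟩
    exact (EqFSCL.and_congr
        (EqFSCL.or_congr (EqFSCL.or_congr
            (EqFSCL.and_congr (.refl _) (.symm (tOrT hP))) (.symm (fAndF hQ)))
          (.symm (fAndF hB))) (.symm (fAndF hf))).trans
      ((star12 (STerm.atom a) P Q B f).trans
        ((EqFSCL.and_congr
            (EqFSCL.or_congr (.refl _) (EqFSCL.or_congr (fAndF hQ) (fAndF hB)))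
            (EqFSCL.and_congr (tOrT hP) (fAndF hf))).trans
          (EqFSCL.and_congr (EqFSCL.or_congr (.refl _) e1) e2)))
  | @neg a P Q hP hQ =>
    intro f B hf hB
    obtain ⟨g1, hg1, e1⟩ := forf hQ hB
    obtain ⟨g2, hg2, e2⟩ := tfand hP hf
    refine ⟨((STerm.atom a).or g2).and g1, .node a hg2 hg1, ?_⟩
    exact (EqFSCL.and_congr
        (EqFSCL.or_congr (EqFSCL.or_congr
            (EqFSCL.and_congr (.refl _) (.symm (tOrT hP))) (.symm (fAndF hQ)))
          (.symm (fAndF hB))) (.symm (fAndF hf))).trans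
      ((star13 (STerm.atom a) P Q B f).trans
        ((EqFSCL.and_congr
            (EqFSCL.or_congr (.refl _) (EqFSCL.and_congr (tOrT hP) (fAndF hf)))
            (EqFSCL.or_congr (fAndF hQ) (fAndF hB))).trans
          (EqFSCL.and_congr (EqFSCL.or_congr (.refl _) e2) e1)))

theorem outCase2 {P Q : STerm A} (_ : IsStarTerm P) (_ : IsDTerm Q)
    (ih1 : ∀ {f B : STerm A}, IsFTerm f → IsFTerm B →
      ∃ g, IsFTerm g ∧ EqFSCL ((P.or B).and f) g)
    (ih2 : ∀ {f B : STerm A}, IsFTerm f → IsFTerm B →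
      ∃ g, IsFTerm g ∧ EqFSCL ((Q.or B).and f) g) :
    ∀ {f B : STerm A}, IsFTerm f → IsFTerm B →
      ∃ g, IsFTerm g ∧ EqFSCL (((P.and Q).or B).and f) g :=
  fun {f B} hf hB =>
    let ⟨g1, hg1, e1⟩ := ih2 hf hB
    let ⟨g, hg, e⟩ := ih1 hg1 hB
    ⟨g, hg,
      (EqFSCL.and_congr (EqFSCL.or_congr (.refl _) (.symm (fAndF hB))) (.refl _)).trans
        ((EqFSCL.and_congr (EqFSCL.F10 P Q B) (.refl _)).trans
          ((EqFSCL.and_congr (EqFSCL.and_congr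
              (EqFSCL.or_congr (.refl _) (fAndF hB))
              (EqFSCL.or_congr (.refl _) (fAndF hB))) (.refl _)).trans
            ((EqFSCL.F7 _ _ _).trans
              ((EqFSCL.and_congr (.refl _) e1).trans e))))⟩

theorem outCase4 {P Q : STerm A} (_ : IsStarTerm P) (_ : IsCTerm Q)
    (ih1 : ∀ {f B : STerm A}, IsFTerm f → IsFTerm B →
      ∃ g, IsFTerm g ∧ EqFSCL ((P.or B).and f) g)
    (ih2 : ∀ {f B : STerm A}, IsFTerm f → IsFTerm B →
      ∃ g, IsFTerm g ∧ EqFSCL ((Q.or B).and f) g) :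
    ∀ {f B : STerm A}, IsFTerm f → IsFTerm B →
      ∃ g, IsFTerm g ∧ EqFSCL (((P.or Q).or B).and f) g :=
  fun {f B} hf hB =>
    let ⟨g1, hg1, e1⟩ := ih2 hf hB
    let ⟨g, hg, e⟩ := ih1 hf hg1
    ⟨g, hg,
      (EqFSCL.and_congr (orAssoc P Q B) (.refl _)).trans
        ((EqFSCL.and_congr (.refl _) (.symm (fAndF hf))).trans
          ((i25 P (Q.or B) f).trans
            ((EqFSCL.and_congr
                (EqFSCL.or_congr (.refl _) (EqFSCL.and_congr (.refl _) (fAndF hf)))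
                (fAndF hf)).trans
              ((EqFSCL.and_congr (EqFSCL.or_congr (.refl _) e1) (.refl _)).trans e))))⟩

theorem outS {s : STerm A} (h : IsStarTerm s) :
    ∀ {f B : STerm A}, IsFTerm f → IsFTerm B →
      ∃ g, IsFTerm g ∧ EqFSCL ((s.or B).and f) g :=
  IsStarTerm.rec
    (motive_1 := fun s _ => ∀ {f B : STerm A}, IsFTerm f → IsFTerm B →
      ∃ g, IsFTerm g ∧ EqFSCL ((s.or B).and f) g)
    (motive_2 := fun s _ => ∀ {f B : STerm A}, IsFTerm f → IsFTerm B →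
      ∃ g, IsFTerm g ∧ EqFSCL ((s.or B).and f) g)
    (motive_3 := fun s _ => ∀ {f B : STerm A}, IsFTerm f → IsFTerm B →
      ∃ g, IsFTerm g ∧ EqFSCL ((s.or B).and f) g)
    (fun l => outL l) (fun a b c d => outCase2 a b c d)
    (fun l => outL l) (fun a b c d => outCase4 a b c d)
    (fun _ ih => ih) (fun _ ih => ih) h

/-- star-term ∧ F-term is an F-term -/
theorem sandFL {s : STerm A} (h : IsLTerm s) :
    ∀ {f : STerm A}, IsFTerm f → ∃ g, IsFTerm g ∧ EqFSCL (s.and f) g := by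
  cases h with
  | @pos a P Q hP hQ =>
    intro f hf
    obtain ⟨g2, hg2, e2⟩ := tfand hP hf
    refine ⟨((STerm.atom a).or Q).and g2, .node a hQ hg2, ?_⟩
    exact (EqFSCL.and_congr (EqFSCL.or_congr
        (EqFSCL.and_congr (.refl _) (.symm (tOrT hP))) (.symm (fAndF hQ)))
        (.symm (fAndF hf))).trans
      ((star5 (STerm.atom a) P Q f).trans
        ((EqFSCL.and_congr (EqFSCL.or_congr (.refl _) (fAndF hQ))
            (EqFSCL.and_congr (tOrT hP) (fAndF hf))).trans
          (EqFSCL.and_congr (.refl _) e2)))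
  | @neg a P Q hP hQ =>
    intro f hf
    obtain ⟨g2, hg2, e2⟩ := tfand hP hf
    refine ⟨((STerm.atom a).or g2).and Q, .node a hg2 hQ, ?_⟩
    exact (EqFSCL.and_congr (EqFSCL.or_congr
        (EqFSCL.and_congr (.refl _) (.symm (tOrT hP))) (.symm (fAndF hQ)))
        (.symm (fAndF hf))).trans
      ((star6 (STerm.atom a) P Q f).trans
        ((EqFSCL.and_congr
            (EqFSCL.or_congr (.refl _) (EqFSCL.and_congr (tOrT hP) (fAndF hf)))
            (fAndF hQ)).trans
          (EqFSCL.and_congr (EqFSCL.or_congr (.refl _) e2) (.refl _))))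

theorem sandFCase2 {P Q : STerm A} (_ : IsStarTerm P) (_ : IsDTerm Q)
    (ih1 : ∀ {f : STerm A}, IsFTerm f → ∃ g, IsFTerm g ∧ EqFSCL (P.and f) g)
    (ih2 : ∀ {f : STerm A}, IsFTerm f → ∃ g, IsFTerm g ∧ EqFSCL (Q.and f) g) :
    ∀ {f : STerm A}, IsFTerm f → ∃ g, IsFTerm g ∧ EqFSCL ((P.and Q).and f) g :=
  fun {f} hf =>
    let ⟨g1, hg1, e1⟩ := ih2 hf
    let ⟨g, hg, e⟩ := ih1 hg1
    ⟨g, hg, (EqFSCL.F7 _ _ _).trans ((EqFSCL.and_congr (.refl _) e1).trans e)⟩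

theorem sandFCase4 {P Q : STerm A} (hP : IsStarTerm P) (_ : IsCTerm Q)
    (_ : ∀ {f : STerm A}, IsFTerm f → ∃ g, IsFTerm g ∧ EqFSCL (P.and f) g)
    (ih2 : ∀ {f : STerm A}, IsFTerm f → ∃ g, IsFTerm g ∧ EqFSCL (Q.and f) g) :
    ∀ {f : STerm A}, IsFTerm f → ∃ g, IsFTerm g ∧ EqFSCL ((P.or Q).and f) g :=
  fun {f} hf =>
    let ⟨g1, hg1, e1⟩ := ih2 hf
    let ⟨g, hg, e⟩ := outS hP hf hg1
    ⟨g, hg,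
      (EqFSCL.and_congr (.refl _) (.symm (fAndF hf))).trans
        ((i25 P Q f).trans
          ((EqFSCL.and_congr
              (EqFSCL.or_congr (.refl _) (EqFSCL.and_congr (.refl _) (fAndF hf)))
              (fAndF hf)).trans
            ((EqFSCL.and_congr (EqFSCL.or_congr (.refl _) e1) (.refl _)).trans e)))⟩

theorem sandFS {s : STerm A} (h : IsStarTerm s) :
    ∀ {f : STerm A}, IsFTerm f → ∃ g, IsFTerm g ∧ EqFSCL (s.and f) g :=
  IsStarTerm.rec
    (motive_1 := fun s _ => ∀ {f : STerm A}, IsFTerm f →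
      ∃ g, IsFTerm g ∧ EqFSCL (s.and f) g)
    (motive_2 := fun s _ => ∀ {f : STerm A}, IsFTerm f →
      ∃ g, IsFTerm g ∧ EqFSCL (s.and f) g)
    (motive_3 := fun s _ => ∀ {f : STerm A}, IsFTerm f →
      ∃ g, IsFTerm g ∧ EqFSCL (s.and f) g)
    (fun l => sandFL l) (fun a b c d => sandFCase2 a b c d)
    (fun l => sandFL l) (fun a b c d => sandFCase4 a b c d)
    (fun _ ih => ih) (fun _ ih => ih) h

theorem assCase1 {P : STerm A} (l : IsLTerm P) :
    ∀ {u : STerm A}, IsStarTerm u → ∃ c, IsCTerm c ∧ EqFSCL (u.and P) c :=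
  fun hu => ⟨_, .and hu (.ell l), .refl _⟩

theorem assCase2 {P Q : STerm A} (_ : IsStarTerm P) (hQ : IsDTerm Q)
    (ih1 : ∀ {u : STerm A}, IsStarTerm u → ∃ c, IsCTerm c ∧ EqFSCL (u.and P) c)
    (_ : ∀ {u : STerm A}, IsStarTerm u → ∃ c, IsCTerm c ∧ EqFSCL (u.and Q) c) :
    ∀ {u : STerm A}, IsStarTerm u → ∃ c, IsCTerm c ∧ EqFSCL (u.and (P.and Q)) c :=
  fun hu =>
    let ⟨c1, hc1, e1⟩ := ih1 hu
    ⟨c1.and Q, .and (.c hc1) hQ,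
      (EqFSCL.symm (.F7 _ _ _)).trans (EqFSCL.and_congr e1 (.refl _))⟩

theorem assCase4 {P Q : STerm A} (hP : IsStarTerm P) (hQ : IsCTerm Q)
    (_ : ∀ {u : STerm A}, IsStarTerm u → ∃ c, IsCTerm c ∧ EqFSCL (u.and P) c)
    (_ : ∀ {u : STerm A}, IsStarTerm u → ∃ c, IsCTerm c ∧ EqFSCL (u.and Q) c) :
    ∀ {u : STerm A}, IsStarTerm u → ∃ c, IsCTerm c ∧ EqFSCL (u.and (P.or Q)) c :=
  fun hu => ⟨_, .and hu (.or hP hQ), .refl _⟩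

/-- star ∧ star is a c-term -/
theorem andSS {s : STerm A} (h : IsStarTerm s) :
    ∀ {u : STerm A}, IsStarTerm u → ∃ c, IsCTerm c ∧ EqFSCL (u.and s) c :=
  IsStarTerm.rec
    (motive_1 := fun s _ => ∀ {u : STerm A}, IsStarTerm u →
      ∃ c, IsCTerm c ∧ EqFSCL (u.and s) c)
    (motive_2 := fun s _ => ∀ {u : STerm A}, IsStarTerm u →
      ∃ c, IsCTerm c ∧ EqFSCL (u.and s) c)
    (motive_3 := fun s _ => ∀ {u : STerm A}, IsStarTerm u →
      ∃ c, IsCTerm c ∧ EqFSCL (u.and s) c)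
    (fun l => assCase1 l) (fun a b c d => assCase2 a b c d)
    (fun l => assCase1 l) (fun a b c d => assCase4 a b c d)
    (fun _ ih => ih) (fun _ ih => ih) h

theorem snf_mixed {t s : STerm A} (ht : IsTTerm t) (hs : IsStarTerm s) :
    IsSNF (t.and s) :=
  Or.inr (Or.inr ⟨t, s, ht, hs, rfl⟩)

/-- conjunction of SNF terms -/
theorem fand {p q : STerm A} (hp : IsSNF p) (hq : IsSNF q) :
    ∃ r, IsSNF r ∧ EqFSCL (p.and q) r := by
  rcases hp with hp | hp | ⟨t, s, ht, hs, rfl⟩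
  · -- p is a T-term
    rcases hq with hq | hq | ⟨t', s', ht', hs', rfl⟩
    · obtain ⟨r, hr, e⟩ := tand hp hq
      exact ⟨r, Or.inl hr, e⟩
    · obtain ⟨r, hr, e⟩ := tfand hp hq
      exact ⟨r, Or.inr (Or.inl hr), e⟩
    · obtain ⟨t3, ht3, e⟩ := tand hp ht'
      exact ⟨t3.and s', snf_mixed ht3 hs',
        (EqFSCL.symm (.F7 _ _ _)).trans (EqFSCL.and_congr e (.refl _))⟩
  · -- p is an F-term
    exact ⟨p, Or.inr (Or.inl hp), i13 hp q⟩
  · -- p = t ∧ s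
    rcases hq with hq | hq | ⟨t', s', ht', hs', rfl⟩
    · obtain ⟨u, hu, eu⟩ := sandS hs hq
      exact ⟨t.and u, snf_mixed ht hu,
        (EqFSCL.F7 _ _ _).trans (EqFSCL.and_congr (.refl _) eu)⟩
    · obtain ⟨g1, hg1, e1⟩ := sandFS hs hq
      obtain ⟨g2, hg2, e2⟩ := tfand ht hg1
      exact ⟨g2, Or.inr (Or.inl hg2),
        (EqFSCL.F7 _ _ _).trans ((EqFSCL.and_congr (.refl _) e1).trans e2)⟩
    · obtain ⟨u, hu, eu⟩ := sandS hs ht'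
      obtain ⟨c, hc, ec⟩ := andSS hs' hu
      refine ⟨t.and c, snf_mixed ht (.c hc), ?_⟩
      exact (EqFSCL.F7 _ _ _).trans
        (EqFSCL.and_congr (.refl _)
          ((EqFSCL.symm (.F7 _ _ _)).trans
            ((EqFSCL.and_congr eu (.refl _)).trans ec)))

/-- negation of an SNF term -/
theorem negSNF {p : STerm A} (hp : IsSNF p) :
    ∃ r, IsSNF r ∧ EqFSCL p.neg r := by
  rcases hp with hp | hp | ⟨t, s, ht, hs, rfl⟩
  · obtain ⟨f, hf, e⟩ := negTTerm hp
    exact ⟨f, Or.inr (Or.inl hf), e⟩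
  · obtain ⟨t, htt, e⟩ := negFTerm hp
    exact ⟨t, Or.inl htt, e⟩
  · obtain ⟨s2, hs2, e2⟩ := negS hs
    exact ⟨t.and s2, snf_mixed ht hs2,
      (i2 ht s).trans (EqFSCL.and_congr (.refl _) e2)⟩

end Main

/-- Existence of SCL normal forms: every closed term is derivably equal to an SNF-term. -/
theorem exists_snf {A : Type} [Nonempty A] (P : STerm A) :
    ∃ Q : STerm A, IsSNF Q ∧ EqFSCL P Q := by
  induction P with
  | atom a =>
    refine ⟨STerm.and .tt (((STerm.atom a).and .tt).or .ff),
      snf_mixed .tt (.c (.ell (.pos a .tt .ff))), ?_⟩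
    exact EqFSCL.symm ((EqFSCL.F4 _).trans ((EqFSCL.F5 _).trans (xAndT _)))
  | tt => exact ⟨.tt, Or.inl .tt, .refl _⟩
  | ff => exact ⟨.ff, Or.inr (Or.inl .ff), .refl _⟩
  | neg P ih =>
    obtain ⟨Q, hQ, e⟩ := ih
    obtain ⟨R, hR, e2⟩ := negSNF hQ
    exact ⟨R, hR, (EqFSCL.neg_congr e).trans e2⟩
  | and P P' ih ih' =>
    obtain ⟨Q, hQ, e⟩ := ih
    obtain ⟨Q', hQ', e'⟩ := ih'
    obtain ⟨R, hR, e3⟩ := fand hQ hQ'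
    exact ⟨R, hR, (EqFSCL.and_congr e e').trans e3⟩
  | or P P' ih ih' =>
    obtain ⟨Q, hQ, e⟩ := ih
    obtain ⟨Q', hQ', e'⟩ := ih'
    obtain ⟨Q1, hQ1, en1⟩ := negSNF hQ
    obtain ⟨Q2, hQ2, en2⟩ := negSNF hQ'
    obtain ⟨R, hR, e3⟩ := fand hQ1 hQ2
    obtain ⟨S, hS, e4⟩ := negSNF hR
    refine ⟨S, hS, (EqFSCL.F2 P P').trans ?_⟩
    exact (EqFSCL.neg_congr (EqFSCL.and_congr
        ((EqFSCL.neg_congr e).trans en1)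
        ((EqFSCL.neg_congr e').trans en2))).trans
      ((EqFSCL.neg_congr e3).trans e4)
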